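/- The only rational numbers t = a/b (in lowest terms, b > 0) such that both (t² + 13t + 49)(t² + 245t + 2401)³/t⁷ and (t² + 13t + 49)(t² + 5t + 1)³/t are integers are t ∈ {1, 7, 49, −1, −7, −49}. -/

import Mathlib

theorem stmt_3 (t : ℚ) (ht : t ≠ 0) :
    ((∃ m : ℤ, (t ^ 2 + 13 * t + 49) * (t ^ 2 + 245 * t + 2401) ^ 3 / t ^ 7 = (m : ℚ)) ∧
      (∃ n : ℤ, (t ^ 2 + 13 * t + 49) * (t ^ 2 + 5 * t + 1) ^ 3 / t = (n : ℚ))) ↔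
    t ∈ ({1, 7, 49, -1, -7, -49} : Set ℚ) := by
  constructor
  · rintro ⟨⟨m, hm⟩, ⟨n, hn⟩⟩
    set a : ℤ := t.num with ha
    set d : ℤ := (t.den : ℤ) with hd
    have hdpos : 0 < d := by rw [hd]; exact_mod_cast t.pos
    have hd0 : (d : ℚ) ≠ 0 := by exact_mod_cast hdpos.ne'
    have htd : (a : ℚ) = t * (d : ℚ) := by
      rw [ha, hd]; exact_mod_cast (Rat.mul_den_eq_num t).symm
    rw [div_eq_iff (pow_ne_zero 7 ht)] at hm
    rw [div_eq_iff ht] at hn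
    have key1 : (a ^ 2 + 13 * a * d + 49 * d ^ 2) * (a ^ 2 + 245 * a * d + 2401 * d ^ 2) ^ 3
        = m * a ^ 7 * d := by
      have : ((a : ℚ) ^ 2 + 13 * a * d + 49 * d ^ 2)
          * ((a : ℚ) ^ 2 + 245 * a * d + 2401 * d ^ 2) ^ 3 = m * a ^ 7 * d := by
        rw [htd]; linear_combination (d : ℚ) ^ 8 * hm
      exact_mod_cast this
    have key2 : (a ^ 2 + 13 * a * d + 49 * d ^ 2) * (a ^ 2 + 5 * a * d + d ^ 2) ^ 3
        = n * a * d ^ 7 := by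
      have : ((a : ℚ) ^ 2 + 13 * a * d + 49 * d ^ 2)
          * ((a : ℚ) ^ 2 + 5 * a * d + d ^ 2) ^ 3 = n * a * d ^ 7 := by
        rw [htd]; linear_combination (d : ℚ) ^ 8 * hn
      exact_mod_cast this
    have hbdvd : d ∣ a ^ 8 := by
      refine ⟨m * a ^ 7 - (748 * a ^ 7 + 196882 * a ^ 6 * d + 20706224 * a ^ 5 * d ^ 2
        + 695893835 * a ^ 4 * d ^ 3 + 10976181104 * a ^ 3 * d ^ 4
        + 90957030178 * a ^ 2 * d ^ 5 + 387556041628 * a * d ^ 6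
        + 678223072849 * d ^ 7), ?_⟩
      linear_combination key1
    have cop : Nat.Coprime t.num.natAbs t.den := t.reduced
    have hden1 : t.den = 1 := by
      have h1 : t.den ∣ t.num.natAbs ^ 8 := by
        have := Int.natAbs_dvd_natAbs.mpr hbdvd
        simpa [Int.natAbs_pow, ha, hd] using this
      have := Nat.Coprime.eq_one_of_dvd (Nat.Coprime.pow_right 8 cop.symm) h1
      exact this
    have hdeq : d = 1 := by simp [hd, hden1]
    have hadvd : a ∣ 49 := by
      have : a ∣ 49 * d ^ 8 := by
        refine ⟨n * d ^ 7 - (a ^ 7 + 28 * a ^ 6 * d + 322 * a ^ 5 * d ^ 2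
          + 1904 * a ^ 4 * d ^ 3 + 5915 * a ^ 3 * d ^ 4 + 8624 * a ^ 2 * d ^ 5
          + 4018 * a * d ^ 6 + 748 * d ^ 7), ?_⟩
        linear_combination key2
      simpa [hdeq] using this
    have hta : t = (a : ℚ) := by
      rw [htd, hdeq]; push_cast; ring
    have hnat : a.natAbs ∣ 49 := by
      have := Int.natAbs_dvd_natAbs.mpr hadvd
      simpa using this
    have hle : a.natAbs ≤ 49 := Nat.le_of_dvd (by norm_num) hnat
    have hcases : a.natAbs = 1 ∨ a.natAbs = 7 ∨ a.natAbs = 49 := by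
      interval_cases h : a.natAbs <;> omega
    have := Int.natAbs_eq a
    simp only [Set.mem_insert_iff, Set.mem_singleton_iff, hta]
    rcases hcases with h | h | h <;> rw [h] at this <;> rcases this with h' | h' <;>
      rw [h'] <;> norm_num
  · intro h
    simp only [Set.mem_insert_iff, Set.mem_singleton_iff] at h
    rcases h with rfl | rfl | rfl | rfl | rfl | rfl
    · exact ⟨⟨1168429123449, by norm_num⟩, ⟨21609, by norm_num⟩⟩
    · exact ⟨⟨16581375, by norm_num⟩, ⟨16581375, by norm_num⟩⟩
    · exact ⟨⟨21609, by norm_num⟩, ⟨1168429123449, by norm_num⟩⟩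
    · exact ⟨⟨-371323264041, by norm_num⟩, ⟨999, by norm_num⟩⟩
    · exact ⟨⟨-3375, by norm_num⟩, ⟨-3375, by norm_num⟩⟩
    · exact ⟨⟨999, by norm_num⟩, ⟨-371323264041, by norm_num⟩⟩
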